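/- Let U ⊆ ℂ be open, let u, h₁, h₂ : ℂ → ℝ and ξ₁, ξ₂, σ : ℂ → ℂ be ℝ-differentiable on U, set aᵢ := (e^{−u}·ξᵢ + e^{u}·hᵢ)/√2 and bᵢ := (e^{−u}·ξᵢ − e^{u}·hᵢ)/√2 (i = 1,2), and let λ ∈ ℂ with |λ| = 1. Let A_k be the 5×5 complex matrix whose only nonzero entries are (1,2) ↦ i·∂u, (2,1) ↦ −i·∂u, (3,4) ↦ σ, (4,3) ↦ −σ; set A_λ := λ⁻¹·A_p(e^{u}/√2, a₁, a₂, b₁, b₂) + A_k, and let B_λ be the entrywise complex conjugate of A_λ. Let F : ℂ → Matrix (Fin 5) (Fin 5) ℝ be ℝ-differentiable on U with F(z)ᵀ·F(z) = 1 on U and, regarding F as complex-matrix valued, ∂F = F·A_λ and ∂̄F = F·B_λ on U. Denote by f, N₁, N₂ the columns 0, 3, 4 of F regarded as maps into ℂ⁵. Then ∂f is ℝ-differentiable on U and for every z ∈ U: Σᵢ (∂̄(∂f)(z))ᵢ·(N₁(z))ᵢ = e^{2u(z)}·h₁(z), Σᵢ (∂̄(∂f)(z))ᵢ·(N₂(z))ᵢ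 = e^{2u(z)}·h₂(z), and Σᵢ (∂̄(∂f)(z))ᵢ·(f(z))ᵢ = −e^{2u(z)}. In particular these quantities do not depend on λ. (This shows that all members of the associated family have the same mean curvature components h₁, h₂, hence the same length of mean curvature vector.) -/

import Mathlib

open Complex Matrix

noncomputable section

attribute [local instance] Matrix.normedAddCommGroup Matrix.normedSpace

/-- Wirtinger derivative ∂G := (1/2)(∂ₓG − i∂ᵧG). -/
def wDz {E : Type*} [NormedAddCommGroup E] [NormedSpace ℂ E] (G : ℂ → E) (z : ℂ) : E :=
  (2⁻¹ : ℂ) • (fderiv ℝ G z 1 - Complex.I • fderiv ℝ G z Complex.I)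

/-- Wirtinger derivative ∂̄G := (1/2)(∂ₓG + i∂ᵧG). -/
def wDzBar {E : Type*} [NormedAddCommGroup E] [NormedSpace ℂ E] (G : ℂ → E) (z : ℂ) : E :=
  (2⁻¹ : ℂ) • (fderiv ℝ G z 1 + Complex.I • fderiv ℝ G z Complex.I)

/-- The 𝔭-part matrix A_p(r, a₁, a₂, b₁, b₂). -/
def Ap (r a₁ a₂ b₁ b₂ : ℂ) : Matrix (Fin 5) (Fin 5) ℂ :=
  !![0, -r, Complex.I * r, 0, 0;
     r, 0, 0, -a₁, -a₂;
     -(Complex.I * r), 0, 0, -(Complex.I * b₁), -(Complex.I * b₂);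
     0, a₁, Complex.I * b₁, 0, 0;
     0, a₂, Complex.I * b₂, 0, 0]

/-- The coefficient aᵢ = (e^{-u}ξᵢ + e^{u}hᵢ)/√2. -/
def aCoef (u : ℂ → ℝ) (ξ : ℂ → ℂ) (h : ℂ → ℝ) (z : ℂ) : ℂ :=
  ((Real.exp (-u z) : ℝ) * ξ z + (Real.exp (u z) : ℝ) * (h z : ℂ)) / (Real.sqrt 2 : ℝ)

/-- The coefficient bᵢ = (e^{-u}ξᵢ - e^{u}hᵢ)/√2. -/
def bCoef (u : ℂ → ℝ) (ξ : ℂ → ℂ) (h : ℂ → ℝ) (z : ℂ) : ℂ :=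
  ((Real.exp (-u z) : ℝ) * ξ z - (Real.exp (u z) : ℝ) * (h z : ℂ)) / (Real.sqrt 2 : ℝ)

/-- The 𝔨-part A_k of the Maurer–Cartan form of an adapted frame. -/
def AKfun (u : ℂ → ℝ) (σ : ℂ → ℂ) (z : ℂ) : Matrix (Fin 5) (Fin 5) ℂ :=
  !![0, 0, 0, 0, 0;
     0, 0, Complex.I * wDz (fun w => (u w : ℂ)) z, 0, 0;
     0, -(Complex.I * wDz (fun w => (u w : ℂ)) z), 0, 0, 0;
     0, 0, 0, 0, σ z;
     0, 0, 0, -σ z, 0]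

/-- The loop of Maurer–Cartan matrices A_λ = λ⁻¹A_𝔭 + A_𝔨. -/
def Alam (lam : ℂ) (u h₁ h₂ : ℂ → ℝ) (ξ₁ ξ₂ σ : ℂ → ℂ) (z : ℂ) :
    Matrix (Fin 5) (Fin 5) ℂ :=
  lam⁻¹ • Ap ((Real.exp (u z) / Real.sqrt 2 : ℝ) : ℂ)
      (aCoef u ξ₁ h₁ z) (aCoef u ξ₂ h₂ z) (bCoef u ξ₁ h₁ z) (bCoef u ξ₂ h₂ z)
    + AKfun u σ z

/-- A real-matrix-valued map regarded as complex-matrix-valued. -/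
def toC (F : ℂ → Matrix (Fin 5) (Fin 5) ℝ) : ℂ → Matrix (Fin 5) (Fin 5) ℂ :=
  fun z => (F z).map (fun x => (x : ℂ))

/-- The j-th column of a real-matrix-valued map, regarded as a map into ℂ⁵. -/
def col (F : ℂ → Matrix (Fin 5) (Fin 5) ℝ) (j : Fin 5) : ℂ → Fin 5 → ℂ :=
  fun z i => ((F z i j : ℝ) : ℂ)

/-! ### Auxiliary lemmas -/

def entryCLM (i j : Fin 5) : Matrix (Fin 5) (Fin 5) ℂ →L[ℝ] ℂ :=
  LinearMap.toContinuousLinearMap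
    { toFun := fun M => M i j
      map_add' := fun _ _ => rfl
      map_smul' := fun _ _ => rfl }

def entryCLMr (i j : Fin 5) : Matrix (Fin 5) (Fin 5) ℝ →L[ℝ] ℝ :=
  LinearMap.toContinuousLinearMap
    { toFun := fun M => M i j
      map_add' := fun _ _ => rfl
      map_smul' := fun _ _ => rfl }

def mapCLM : Matrix (Fin 5) (Fin 5) ℝ →L[ℝ] Matrix (Fin 5) (Fin 5) ℂ :=
  LinearMap.toContinuousLinearMap
    { toFun := fun M => M.map (fun x => (x : ℂ))
      map_add' := fun M N => by ext i j; simp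
      map_smul' := fun c M => by ext i j; simp [Matrix.map_apply] }

lemma wDz_entry (G : ℂ → Matrix (Fin 5) (Fin 5) ℂ) (z : ℂ)
    (hG : DifferentiableAt ℝ G z) (i j : Fin 5) :
    wDz (fun w => G w i j) z = wDz G z i j := by
  have h : fderiv ℝ (fun w => (entryCLM i j) (G w)) z
      = (entryCLM i j).comp (fderiv ℝ G z) :=
    ((entryCLM i j).hasFDerivAt.comp z hG.hasFDerivAt).fderiv
  simp only [wDz]
  rw [show (fun w => G w i j) = fun w => (entryCLM i j) (G w) from rfl, h]
  simp [entryCLM, Matrix.smul_apply, Matrix.sub_apply, smul_eq_mul, LinearMap.coe_mk, AddHom.coe_mk]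
  rfl

lemma wDzBar_entry (G : ℂ → Matrix (Fin 5) (Fin 5) ℂ) (z : ℂ)
    (hG : DifferentiableAt ℝ G z) (i j : Fin 5) :
    wDzBar (fun w => G w i j) z = wDzBar G z i j := by
  have h : fderiv ℝ (fun w => (entryCLM i j) (G w)) z
      = (entryCLM i j).comp (fderiv ℝ G z) :=
    ((entryCLM i j).hasFDerivAt.comp z hG.hasFDerivAt).fderiv
  simp only [wDzBar]
  rw [show (fun w => G w i j) = fun w => (entryCLM i j) (G w) from rfl, h]
  simp [entryCLM, Matrix.smul_apply, Matrix.add_apply, smul_eq_mul, LinearMap.coe_mk, AddHom.coe_mk]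
  rfl

lemma wDz_pi (G : ℂ → Fin 5 → ℂ) (z : ℂ) (hG : DifferentiableAt ℝ G z) (i : Fin 5) :
    wDz G z i = wDz (fun w => G w i) z := by
  have h : fderiv ℝ (⇑(ContinuousLinearMap.proj (R := ℝ) (φ := fun _ : Fin 5 => ℂ) i) ∘ G) z
      = (ContinuousLinearMap.proj (R := ℝ) (φ := fun _ : Fin 5 => ℂ) i).comp (fderiv ℝ G z) :=
    ((ContinuousLinearMap.proj (R := ℝ) (φ := fun _ : Fin 5 => ℂ) i).hasFDerivAt.comp z
      hG.hasFDerivAt).fderiv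
  simp only [wDz]
  rw [show (fun w => G w i)
      = ⇑(ContinuousLinearMap.proj (R := ℝ) (φ := fun _ : Fin 5 => ℂ) i) ∘ G from rfl, h]
  simp [smul_eq_mul]

lemma wDzBar_pi (G : ℂ → Fin 5 → ℂ) (z : ℂ) (hG : DifferentiableAt ℝ G z) (i : Fin 5) :
    wDzBar G z i = wDzBar (fun w => G w i) z := by
  have h : fderiv ℝ (⇑(ContinuousLinearMap.proj (R := ℝ) (φ := fun _ : Fin 5 => ℂ) i) ∘ G) z
      = (ContinuousLinearMap.proj (R := ℝ) (φ := fun _ : Fin 5 => ℂ) i).comp (fderiv ℝ G z) :=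
    ((ContinuousLinearMap.proj (R := ℝ) (φ := fun _ : Fin 5 => ℂ) i).hasFDerivAt.comp z
      hG.hasFDerivAt).fderiv
  simp only [wDzBar]
  rw [show (fun w => G w i)
      = ⇑(ContinuousLinearMap.proj (R := ℝ) (φ := fun _ : Fin 5 => ℂ) i) ∘ G from rfl, h]
  simp [smul_eq_mul]

lemma wDzBar_mul (f g : ℂ → ℂ) (z : ℂ)
    (hf : DifferentiableAt ℝ f z) (hg : DifferentiableAt ℝ g z) :
    wDzBar (fun w => f w * g w) z = wDzBar f z * g z + f z * wDzBar g z := by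
  simp only [wDzBar, fderiv_fun_mul hf hg, ContinuousLinearMap.add_apply,
    ContinuousLinearMap.smul_apply, smul_eq_mul]
  ring

lemma wDzBar_const_mul (c : ℂ) (f : ℂ → ℂ) (z : ℂ) (hf : DifferentiableAt ℝ f z) :
    wDzBar (fun w => c * f w) z = c * wDzBar f z := by
  simp only [wDzBar, fderiv_const_mul hf c, ContinuousLinearMap.smul_apply, smul_eq_mul]
  ring

lemma wDzBar_sub (f g : ℂ → ℂ) (z : ℂ)
    (hf : DifferentiableAt ℝ f z) (hg : DifferentiableAt ℝ g z) :
    wDzBar (fun w => f w - g w) z = wDzBar f z - wDzBar g z := by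
  simp only [wDzBar, fderiv_fun_sub hf hg, ContinuousLinearMap.sub_apply, smul_eq_mul]
  ring

def Gaux (lam : ℂ) (u : ℂ → ℝ) (F : ℂ → Matrix (Fin 5) (Fin 5) ℝ) : ℂ → Fin 5 → ℂ :=
  fun w i => lam⁻¹ * (((Real.exp (u w) / Real.sqrt 2 : ℝ) : ℂ) *
    (((F w i 1 : ℝ) : ℂ) - Complex.I * ((F w i 2 : ℝ) : ℂ)))

set_option maxHeartbeats 2000000 in
/-- all members of the associated family have the same mean
curvature components h₁, h₂: ⟨f_{z̄z}, Nᵢ(λ)⟩ = e^{2u}hᵢ and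
⟨f_{z̄z}, f⟩ = −e^{2u}, independently of λ. -/
theorem associated_family_mean_curvature
    (U : Set ℂ) (hU : IsOpen U)
    (u h₁ h₂ : ℂ → ℝ) (ξ₁ ξ₂ σ : ℂ → ℂ)
    (hu : ∀ z ∈ U, DifferentiableAt ℝ (fun w => (u w : ℂ)) z)
    (hh₁ : ∀ z ∈ U, DifferentiableAt ℝ (fun w => (h₁ w : ℂ)) z)
    (hh₂ : ∀ z ∈ U, DifferentiableAt ℝ (fun w => (h₂ w : ℂ)) z)
    (hξ₁ : ∀ z ∈ U, DifferentiableAt ℝ ξ₁ z)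
    (hξ₂ : ∀ z ∈ U, DifferentiableAt ℝ ξ₂ z)
    (hσ : ∀ z ∈ U, DifferentiableAt ℝ σ z)
    (lam : ℂ) (hlam : ‖lam‖ = 1)
    (F : ℂ → Matrix (Fin 5) (Fin 5) ℝ)
    (hF : ∀ z ∈ U, DifferentiableAt ℝ F z)
    (horth : ∀ z ∈ U, (F z)ᵀ * F z = 1)
    (hMC : ∀ z ∈ U, wDz (toC F) z = toC F z * Alam lam u h₁ h₂ ξ₁ ξ₂ σ z)
    (hMCbar : ∀ z ∈ U, wDzBar (toC F) z
      = toC F z * (Alam lam u h₁ h₂ ξ₁ ξ₂ σ z).map (starRingEnd ℂ)) :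
    (∀ z ∈ U, DifferentiableAt ℝ (fun w => wDz (_root_.col F 0) w) z) ∧
    (∀ z ∈ U,
      (∑ i : Fin 5, wDzBar (fun w => wDz (_root_.col F 0) w) z i * _root_.col F 3 z i
          = (Real.exp (2 * u z) : ℂ) * (h₁ z : ℂ)) ∧
      (∑ i : Fin 5, wDzBar (fun w => wDz (_root_.col F 0) w) z i * _root_.col F 4 z i
          = (Real.exp (2 * u z) : ℂ) * (h₂ z : ℂ)) ∧
      (∑ i : Fin 5, wDzBar (fun w => wDz (_root_.col F 0) w) z i * _root_.col F 0 z i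
          = -(Real.exp (2 * u z) : ℂ))) := by
  have hlam0 : lam ≠ 0 := fun h0 => by simp [h0] at hlam
  have hinv : lam⁻¹ * lam = 1 := by field_simp
  have hclam : (starRingEnd ℂ) lam⁻¹ = lam := by
    have h1 : lam * (starRingEnd ℂ) lam = 1 := by
      rw [Complex.mul_conj, ← Complex.sq_norm, hlam]; norm_num
    rw [map_inv₀, inv_eq_iff_eq_inv]
    exact eq_inv_of_mul_eq_one_left (by linear_combination h1)
  have hud : ∀ w ∈ U, DifferentiableAt ℝ u w := fun w hw => by
    have := Complex.reCLM.differentiableAt.comp w (hu w hw)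
    simpa [Function.comp_def] using this
  have hRd : ∀ w ∈ U,
      DifferentiableAt ℝ (fun w' => ((Real.exp (u w') / Real.sqrt 2 : ℝ) : ℂ)) w := by
    intro w hw
    have h1 : DifferentiableAt ℝ (fun w' => Real.exp (u w') / Real.sqrt 2) w := by
      simp only [div_eq_mul_inv]
      exact ((hud w hw).exp).mul_const _
    exact Complex.ofRealCLM.differentiableAt.comp w h1
  have hFe : ∀ (i j : Fin 5), ∀ w ∈ U,
      DifferentiableAt ℝ (fun w' => ((F w' i j : ℝ) : ℂ)) w := fun i j w hw =>
    Complex.ofRealCLM.differentiableAt.comp w ((entryCLMr i j).differentiableAt.comp w (hF w hw))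
  have htoC : ∀ w ∈ U, DifferentiableAt ℝ (toC F) w := fun w hw =>
    mapCLM.differentiableAt.comp w (hF w hw)
  have hcold : ∀ w ∈ U, DifferentiableAt ℝ (_root_.col F 0) w := fun w hw =>
    differentiableAt_pi.mpr (fun i => hFe i 0 w hw)
  have hGd : ∀ w ∈ U, DifferentiableAt ℝ (Gaux lam u F) w := by
    intro w hw
    apply differentiableAt_pi.mpr
    intro i
    exact (differentiableAt_const _).mul ((hRd w hw).mul
      ((hFe i 1 w hw).sub ((differentiableAt_const _).mul (hFe i 2 w hw))))
  have hkeyU : ∀ w ∈ U, wDz (_root_.col F 0) w = Gaux lam u F w := by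
    intro w hw
    funext i
    rw [wDz_pi _ _ (hcold w hw) i]
    have e1 : wDz (fun w' => _root_.col F 0 w' i) w = wDz (toC F) w i 0 :=
      wDz_entry (toC F) w (htoC w hw) i 0
    rw [e1, hMC w hw, Matrix.mul_apply, Fin.sum_univ_five]
    simp [Gaux, Alam, Matrix.add_apply, Matrix.smul_apply, smul_eq_mul, Ap, AKfun, toC,
      Matrix.map_apply, Matrix.cons_val_zero, Matrix.cons_val_one, Matrix.head_cons,
      Matrix.cons_val_two, Matrix.cons_val_three, Matrix.cons_val_four,
      Matrix.vecTail, Matrix.vecHead]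
    ring
  constructor
  · intro z hz
    have hev : (fun w => wDz (_root_.col F 0) w) =ᶠ[nhds z] Gaux lam u F :=
      Filter.eventuallyEq_of_mem (hU.mem_nhds hz) (fun w hw => hkeyU w hw)
    exact (hGd z hz).congr_of_eventuallyEq hev
  · intro z hz
    have hev : (fun w => wDz (_root_.col F 0) w) =ᶠ[nhds z] Gaux lam u F :=
      Filter.eventuallyEq_of_mem (hU.mem_nhds hz) (fun w hw => hkeyU w hw)
    have hbar : wDzBar (fun w => wDz (_root_.col F 0) w) z = wDzBar (Gaux lam u F) z := by
      simp only [wDzBar, hev.fderiv_eq]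
    have orth : ∀ k j : Fin 5,
        ∑ i, ((F z i k : ℝ) : ℂ) * ((F z i j : ℝ) : ℂ) = if k = j then 1 else 0 := by
      intro k j
      have h2 := congrFun (congrFun (horth z hz) k) j
      rw [Matrix.mul_apply] at h2
      simp only [Matrix.transpose_apply, Matrix.one_apply] at h2
      have hc : ∑ i, ((F z i k : ℝ) : ℂ) * ((F z i j : ℝ) : ℂ)
          = ((∑ i, F z i k * F z i j : ℝ) : ℂ) := by push_cast; rfl
      rw [hc, h2]
      split <;> simp
    have key : ∃ C : ℂ, ∀ i : Fin 5, wDzBar (fun w => wDz (_root_.col F 0) w) z i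
        = -((Real.exp (2 * u z) : ℝ) : ℂ) * ((F z i 0 : ℝ) : ℂ)
          + C * ((F z i 1 : ℝ) : ℂ) + (-(Complex.I * C)) * ((F z i 2 : ℝ) : ℂ)
          + ((Real.exp (2 * u z) : ℝ) : ℂ) * ((h₁ z : ℝ) : ℂ) * ((F z i 3 : ℝ) : ℂ)
          + ((Real.exp (2 * u z) : ℝ) : ℂ) * ((h₂ z : ℝ) : ℂ) * ((F z i 4 : ℝ) : ℂ) := by
      refine ⟨lam⁻¹ * (wDzBar (fun w' => ((Real.exp (u w') / Real.sqrt 2 : ℝ) : ℂ)) z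
        - ((Real.exp (u z) / Real.sqrt 2 : ℝ) : ℂ)
          * (starRingEnd ℂ) (wDz (fun w => (u w : ℂ)) z)), ?_⟩
      intro i
      rw [hbar, wDzBar_pi _ z (hGd z hz) i]
      simp only [Gaux]
      rw [wDzBar_const_mul lam⁻¹
        (fun w => ((Real.exp (u w) / Real.sqrt 2 : ℝ) : ℂ) *
          (((F w i 1 : ℝ) : ℂ) - Complex.I * ((F w i 2 : ℝ) : ℂ))) z
        ((hRd z hz).mul ((hFe i 1 z hz).sub ((differentiableAt_const _).mul (hFe i 2 z hz))))]
      rw [wDzBar_mul (fun w => ((Real.exp (u w) / Real.sqrt 2 : ℝ) : ℂ))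
        (fun w => ((F w i 1 : ℝ) : ℂ) - Complex.I * ((F w i 2 : ℝ) : ℂ)) z (hRd z hz)
        ((hFe i 1 z hz).sub ((differentiableAt_const _).mul (hFe i 2 z hz)))]
      rw [wDzBar_sub (fun w => ((F w i 1 : ℝ) : ℂ))
        (fun w => Complex.I * ((F w i 2 : ℝ) : ℂ)) z (hFe i 1 z hz)
        ((differentiableAt_const _).mul (hFe i 2 z hz))]
      rw [wDzBar_const_mul Complex.I (fun w => ((F w i 2 : ℝ) : ℂ)) z (hFe i 2 z hz)]
      have hb1 : wDzBar (fun w => ((F w i 1 : ℝ) : ℂ)) z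
          = (toC F z * (Alam lam u h₁ h₂ ξ₁ ξ₂ σ z).map (starRingEnd ℂ)) i 1 := by
        rw [← hMCbar z hz]; exact wDzBar_entry (toC F) z (htoC z hz) i 1
      have hb2 : wDzBar (fun w => ((F w i 2 : ℝ) : ℂ)) z
          = (toC F z * (Alam lam u h₁ h₂ ξ₁ ξ₂ σ z).map (starRingEnd ℂ)) i 2 := by
        rw [← hMCbar z hz]; exact wDzBar_entry (toC F) z (htoC z hz) i 2
      rw [hb1, hb2, Matrix.mul_apply, Matrix.mul_apply, Fin.sum_univ_five, Fin.sum_univ_five]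
      simp [Alam, Matrix.map_apply, Matrix.add_apply, Matrix.smul_apply, smul_eq_mul,
        Ap, AKfun, toC, Matrix.cons_val_zero, Matrix.cons_val_one, Matrix.head_cons,
        Matrix.cons_val_two, Matrix.cons_val_three, Matrix.cons_val_four,
        Matrix.vecTail, Matrix.vecHead, map_add, _root_.map_mul, map_neg,
        Complex.conj_ofReal, hclam, aCoef, bCoef, map_div₀, map_sub]
      simp only [← Complex.exp_conj, map_neg, Complex.conj_ofReal]
      have h2u : Complex.exp (2 * (u z : ℂ))
          = Complex.exp ((u z : ℂ)) * Complex.exp ((u z : ℂ)) := by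
        rw [two_mul, Complex.exp_add]
      have hs2 : ((Real.sqrt 2 : ℝ) : ℂ) * ((Real.sqrt 2 : ℝ) : ℂ) = 2 := by
        rw [← Complex.ofReal_mul, Real.mul_self_sqrt (by norm_num)]; norm_num
      have hs0 : ((Real.sqrt 2 : ℝ) : ℂ) ≠ 0 := by
        simp [Real.sqrt_eq_zero']
      have hdd : ∀ x : ℂ, x / ((Real.sqrt 2 : ℝ) : ℂ) = ((Real.sqrt 2 : ℝ) : ℂ) * x / 2 := by
        intro x
        field_simp
        linear_combination (-x) * hs2
      simp only [hdd]
      rw [h2u]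
      have hI : Complex.I * Complex.I = -1 := Complex.I_mul_I
      linear_combination
        (lam * lam⁻¹ * (((Real.sqrt 2 : ℝ) : ℂ) * ((Real.sqrt 2 : ℝ) : ℂ)) / 4 *
          (Complex.exp ((u z : ℂ)) * Complex.exp (-(u z : ℂ)) *
              ((starRingEnd ℂ) (ξ₁ z) * ((F z i 3 : ℝ) : ℂ)
                + (starRingEnd ℂ) (ξ₂ z) * ((F z i 4 : ℝ) : ℂ))
            + Complex.exp ((u z : ℂ)) * Complex.exp ((u z : ℂ)) *
              (((F z i 0 : ℝ) : ℂ) - ((h₁ z : ℝ) : ℂ) * ((F z i 3 : ℝ) : ℂ)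
                - ((h₂ z : ℝ) : ℂ) * ((F z i 4 : ℝ) : ℂ)))
          + lam⁻¹ * ((Real.sqrt 2 : ℝ) : ℂ) * Complex.exp ((u z : ℂ))
            * (starRingEnd ℂ) (wDz (fun w => (u w : ℂ)) z) * ((F z i 1 : ℝ) : ℂ) / 2) * hI
        + (-(lam⁻¹ * lam / 2) * (Complex.exp ((u z : ℂ)) * Complex.exp ((u z : ℂ)) *
          (((F z i 0 : ℝ) : ℂ) - ((h₁ z : ℝ) : ℂ) * ((F z i 3 : ℝ) : ℂ)
            - ((h₂ z : ℝ) : ℂ) * ((F z i 4 : ℝ) : ℂ)))) * hs2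
        + (-(Complex.exp ((u z : ℂ)) * Complex.exp ((u z : ℂ)) *
          (((F z i 0 : ℝ) : ℂ) - ((h₁ z : ℝ) : ℂ) * ((F z i 3 : ℝ) : ℂ)
            - ((h₂ z : ℝ) : ℂ) * ((F z i 4 : ℝ) : ℂ)))) * hinv
    obtain ⟨C, key⟩ := key
    have main : ∀ j : Fin 5,
        ∑ i : Fin 5, wDzBar (fun w => wDz (_root_.col F 0) w) z i * ((F z i j : ℝ) : ℂ)
        = -((Real.exp (2 * u z) : ℝ) : ℂ) * (if (0 : Fin 5) = j then 1 else 0)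
          + C * (if (1 : Fin 5) = j then 1 else 0)
          + (-(Complex.I * C)) * (if (2 : Fin 5) = j then 1 else 0)
          + ((Real.exp (2 * u z) : ℝ) : ℂ) * ((h₁ z : ℝ) : ℂ) * (if (3 : Fin 5) = j then 1 else 0)
          + ((Real.exp (2 * u z) : ℝ) : ℂ) * ((h₂ z : ℝ) : ℂ) * (if (4 : Fin 5) = j then 1 else 0) := by
      intro j
      rw [← orth 0 j, ← orth 1 j, ← orth 2 j, ← orth 3 j, ← orth 4 j]
      rw [Finset.mul_sum, Finset.mul_sum, Finset.mul_sum, Finset.mul_sum, Finset.mul_sum,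
        ← Finset.sum_add_distrib, ← Finset.sum_add_distrib, ← Finset.sum_add_distrib,
        ← Finset.sum_add_distrib]
      exact Finset.sum_congr rfl (fun i _ => by rw [key i]; ring)
    refine ⟨?_, ?_, ?_⟩
    · have := main 3
      simp only [_root_.col]
      rw [this]
      norm_num [show ((0:Fin 5) = 3) = False by simp, show ((1:Fin 5) = 3) = False by simp,
        show ((2:Fin 5) = 3) = False by simp, show ((4:Fin 5) = 3) = False by simp,
        show ((0:Fin 5) = 4) = False by simp, show ((1:Fin 5) = 4) = False by simp,
        show ((2:Fin 5) = 4) = False by simp, show ((3:Fin 5) = 4) = False by simp,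
        show ((1:Fin 5) = 0) = False by simp, show ((2:Fin 5) = 0) = False by simp,
        show ((3:Fin 5) = 0) = False by simp, show ((4:Fin 5) = 0) = False by simp]
    · have := main 4
      simp only [_root_.col]
      rw [this]
      norm_num [show ((0:Fin 5) = 3) = False by simp, show ((1:Fin 5) = 3) = False by simp,
        show ((2:Fin 5) = 3) = False by simp, show ((4:Fin 5) = 3) = False by simp,
        show ((0:Fin 5) = 4) = False by simp, show ((1:Fin 5) = 4) = False by simp,
        show ((2:Fin 5) = 4) = False by simp, show ((3:Fin 5) = 4) = False by simp,
        show ((1:Fin 5) = 0) = False by simp, show ((2:Fin 5) = 0) = False by simp,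
        show ((3:Fin 5) = 0) = False by simp, show ((4:Fin 5) = 0) = False by simp]
    · have := main 0
      simp only [_root_.col]
      rw [this]
      norm_num [show ((0:Fin 5) = 3) = False by simp, show ((1:Fin 5) = 3) = False by simp,
        show ((2:Fin 5) = 3) = False by simp, show ((4:Fin 5) = 3) = False by simp,
        show ((0:Fin 5) = 4) = False by simp, show ((1:Fin 5) = 4) = False by simp,
        show ((2:Fin 5) = 4) = False by simp, show ((3:Fin 5) = 4) = False by simp,
        show ((1:Fin 5) = 0) = False by simp, show ((2:Fin 5) = 0) = False by simp,
        show ((3:Fin 5) = 0) = False by simp, show ((4:Fin 5) = 0) = False by simp]
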